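/- On the real line, consider n agents with agent i at position 2^(i-1) for i = 1,...,n, and n items with item j at position 2^j for j = 1,...,n-1 and item n at position 0. The matching that pairs agent i with item i for each i has total cost 2^n - 1, while the matching pairing agent 1 with item n and agent i with item i-1 for i ≥ 2 has total cost 1. Hence the first matching has cost (2^n - 1) times the minimum-cost matching. -/
import Mathlib


/-- The serializable lower-bound instance on the real line: agents at `2^(i-1)`,
items at `2^j` (and one item at 0).  The serial matching costs `2^n - 1`,
the shifted matching costs `1`, so the serial matching costs `2^n - 1` times
the minimum-cost matching. -/
theorem stmt5 (n : ℕ) (hn : 0 < n) (agents items : Fin n → ℝ)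
    (ha : ∀ i : Fin n, agents i = 2 ^ (i : ℕ))
    (hi : ∀ j : Fin n, items j = if (j : ℕ) = n - 1 then 0 else 2 ^ ((j : ℕ) + 1)) :
    (∑ i, dist (agents i) (items i)) = 2 ^ n - 1 ∧
    (∑ i : Fin n, dist (agents i) (items ⟨((i : ℕ) + (n - 1)) % n, Nat.mod_lt _ hn⟩)) = 1 ∧
    (∑ i, dist (agents i) (items i)) =
      (2 ^ n - 1) *
        ∑ i : Fin n, dist (agents i) (items ⟨((i : ℕ) + (n - 1)) % n, Nat.mod_lt _ hn⟩) := by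
  have h1 : (∑ i, dist (agents i) (items i)) = 2 ^ n - 1 := by
    have hterm : ∀ i : Fin n, dist (agents i) (items i) = 2 ^ (i : ℕ) := by
      intro i
      rw [ha, hi]
      by_cases h : (i : ℕ) = n - 1
      · simp [h, Real.dist_eq, abs_of_nonneg, (by positivity : (0:ℝ) ≤ 2 ^ (i:ℕ))]
      · simp only [h, if_false, Real.dist_eq, pow_succ]
        rw [abs_of_nonpos (by nlinarith [pow_pos (by norm_num : (0:ℝ) < 2) (i:ℕ)])]
        ring
    rw [Finset.sum_congr rfl (fun i _ => hterm i), Fin.sum_univ_eq_sum_range,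
      geom_sum_eq (by norm_num : (2:ℝ) ≠ 1)]
    norm_num
  have h2 : (∑ i : Fin n, dist (agents i) (items ⟨((i : ℕ) + (n - 1)) % n, Nat.mod_lt _ hn⟩)) = 1 := by
    have hterm : ∀ i : Fin n,
        dist (agents i) (items ⟨((i : ℕ) + (n - 1)) % n, Nat.mod_lt _ hn⟩)
          = if i = (⟨0, hn⟩ : Fin n) then 1 else 0 := by
      intro i
      rw [ha, hi]
      by_cases h : (i : ℕ) = 0
      · have hi0 : i = (⟨0, hn⟩ : Fin n) := Fin.ext h
        have hmod : (0 + (n - 1)) % n = n - 1 := by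
          rw [Nat.zero_add, Nat.mod_eq_of_lt (Nat.sub_lt hn one_pos)]
        simp [hi0, h, hmod]
      · obtain ⟨k, hk⟩ := Nat.exists_eq_succ_of_ne_zero h
        have hi0 : i ≠ (⟨0, hn⟩ : Fin n) := fun hc => h (by simp [hc])
        have hkn : k + 1 < n := by have := i.isLt; omega
        have hmod : (k + 1 + (n - 1)) % n = k := by
          have : k + 1 + (n - 1) = k + n := by omega
          rw [this, Nat.add_mod_right, Nat.mod_eq_of_lt (by omega)]
        have hkne : k ≠ n - 1 := by omega
        simp [hi0, hmod, hkne, hk]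
    rw [Finset.sum_congr rfl (fun i _ => hterm i), Finset.sum_ite_eq' Finset.univ]
    simp
  exact ⟨h1, h2, by rw [h1, h2, mul_one]⟩
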